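/- Let G be a simply connected real Lie group whose underlying group is nilpotent, and let L be a nontrivial connected normal subgroup of G (that is, the underlying set of L is a connected subset of G and L ≠ {1}). Then L intersects the identity component of the center of G nontrivially: there exists x ≠ 1 with x ∈ L such that x lies in the connected component of the identity of the topological group Z(G), where Z(G) = Subgroup.center G carries the subspace topology. (Corollary 2.3 of the paper.) -/

import Mathlib

open Set Pointwise
open scoped commutatorElement

/-- Powers of a preconnected set containing `1` are preconnected and contain `1`. -/
private lemma aux_pow_preconnected {G : Type*} [Group G] [TopologicalSpace G]
    [IsTopologicalGroup G] {T : Set G} (h1 : (1 : G) ∈ T) (hT : IsPreconnected T) :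
    ∀ n : ℕ, (1 : G) ∈ T ^ (n + 1) ∧ IsPreconnected (T ^ (n + 1)) := by
  intro n
  induction n with
  | zero => simpa using ⟨h1, hT⟩
  | succ n ih =>
    rw [pow_succ]
    refine ⟨by simpa using Set.mul_mem_mul ih.1 h1, ?_⟩
    rw [← Set.image_mul_prod]
    exact (ih.2.prod hT).image _ continuous_mul.continuousOn

/-- The subgroup generated by a preconnected set containing `1` is preconnected. -/
private lemma aux_closure_preconnected {G : Type*} [Group G] [TopologicalSpace G]
    [IsTopologicalGroup G] {S : Set G} (h1 : (1 : G) ∈ S) (hS : IsPreconnected S) :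
    IsPreconnected ((Subgroup.closure S : Subgroup G) : Set G) := by
  set T : Set G := S ∪ S⁻¹ with hTdef
  have h1T : (1 : G) ∈ T := Or.inl h1
  have hSinv : IsPreconnected (S⁻¹ : Set G) := by
    rw [← Set.image_inv_eq_inv]
    exact hS.image _ continuous_inv.continuousOn
  have hTconn : IsPreconnected T :=
    IsPreconnected.union 1 h1 (by simpa using h1) hS hSinv
  have hTinv : T⁻¹ = T := by
    rw [hTdef, Set.union_inv, inv_inv, Set.union_comm]
  have hpow := aux_pow_preconnected h1T hTconn
  -- the union of the powers of `T` is a subgroup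
  let U : Subgroup G :=
    { carrier := ⋃ n : ℕ, T ^ (n + 1)
      one_mem' := Set.mem_iUnion.2 ⟨0, (hpow 0).1⟩
      mul_mem' := by
        rintro a b ha hb
        obtain ⟨m, hm⟩ := Set.mem_iUnion.1 ha
        obtain ⟨n, hn⟩ := Set.mem_iUnion.1 hb
        refine Set.mem_iUnion.2 ⟨m + n + 1, ?_⟩
        have : T ^ (m + n + 1 + 1) = T ^ (m + 1) * T ^ (n + 1) := by
          rw [← pow_add]; ring_nf
        rw [this]
        exact Set.mul_mem_mul hm hn
      inv_mem' := by
        rintro a ha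
        obtain ⟨n, hn⟩ := Set.mem_iUnion.1 ha
        refine Set.mem_iUnion.2 ⟨n, ?_⟩
        have : T ^ (n + 1) = (T ^ (n + 1))⁻¹ := by
          rw [← inv_pow, hTinv]
        rw [this]
        exact Set.inv_mem_inv.2 hn }
  have hEq : ((Subgroup.closure S : Subgroup G) : Set G) = ⋃ n : ℕ, T ^ (n + 1) := by
    apply subset_antisymm
    · have : Subgroup.closure S ≤ U := by
        rw [Subgroup.closure_le]
        intro x hx
        exact Set.mem_iUnion.2 ⟨0, by rw [zero_add, pow_one]; exact Or.inl hx⟩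
      exact this
    · refine Set.iUnion_subset fun n => ?_
      induction n with
      | zero =>
        simp only [zero_add, pow_one]
        rintro x (hx | hx)
        · exact Subgroup.subset_closure hx
        · exact (Subgroup.closure S).inv_mem_iff.1 (Subgroup.subset_closure hx)
      | succ n ih =>
        rw [pow_succ]
        rw [Set.mul_subset_iff]
        intro x hx y hy
        refine (Subgroup.closure S).mul_mem (ih hx) ?_
        rcases hy with hy | hy
        · exact Subgroup.subset_closure hy
        · exact (Subgroup.closure S).inv_mem_iff.1 (Subgroup.subset_closure hy)
  rw [hEq]
  exact isPreconnected_iUnion ⟨1, Set.mem_iInter.2 fun n => (hpow n).1⟩ fun n => (hpow n).2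

/-- **Corollary 2.3.** Let `G` be a simply connected (real) Lie group whose underlying group is
nilpotent, and let `L` be a non-trivial connected normal subgroup of `G`. Then `L` intersects
the identity component of the center of `G` non-trivially. -/
theorem connected_normal_subgroup_inter_center_identityComponent
    {E : Type*} [NormedAddCommGroup E] [NormedSpace ℝ E] [FiniteDimensional ℝ E]
    {G : Type*} [TopologicalSpace G] [ChartedSpace E G] [Group G] [IsTopologicalGroup G]
    [LieGroup (modelWithCornersSelf ℝ E) (⊤ : ℕ∞) G]
    [SimplyConnectedSpace G] [Group.IsNilpotent G]
    (L : Subgroup G) [L.Normal] (hL : L ≠ ⊥) (hLconn : IsConnected (L : Set G)) :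
    ∃ x : Subgroup.center G, (x : G) ≠ 1 ∧ (x : G) ∈ L ∧
      x ∈ connectedComponent (1 : Subgroup.center G) := by
  classical
  -- the descending series `f 0 = L`, `f (k+1) = ⁅⊤, f k⁆`
  let f : ℕ → Subgroup G := fun k => (fun H => ⁅(⊤ : Subgroup G), H⁆)^[k] L
  have hf0 : f 0 = L := rfl
  have hfsucc : ∀ k, f (k + 1) = ⁅(⊤ : Subgroup G), f k⁆ := fun k =>
    Function.iterate_succ_apply' _ k L
  -- `f k ≤ L`
  have h_le_L : ∀ k, f k ≤ L := by
    intro k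
    induction k with
    | zero => exact le_rfl
    | succ k ih =>
      rw [hfsucc]
      exact le_trans (Subgroup.commutator_mono le_rfl ih) (Subgroup.commutator_le_right ⊤ L)
  -- `f k ≤ lowerCentralSeries G k`
  have h_lcs : ∀ k, f k ≤ lowerCentralSeries (⊤ : Subgroup G) k := by
    intro k
    induction k with
    | zero => exact le_top
    | succ k ih =>
      rw [hfsucc, Subgroup.commutator_comm]
      exact Subgroup.commutator_mono ih le_rfl
  -- each `f k` is preconnected
  have h_conn : ∀ k, IsPreconnected ((f k : Subgroup G) : Set G) := by
    intro k
    induction k with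
    | zero => exact hLconn.2
    | succ k ih =>
      rw [hfsucc, Subgroup.commutator_def]
      have hset : { g : G | ∃ g₁ ∈ (⊤ : Subgroup G), ∃ g₂ ∈ f k, ⁅g₁, g₂⁆ = g } =
          ⋃ g : G, (fun h => ⁅g, h⁆) '' ((f k : Subgroup G) : Set G) := by
        ext x
        simp only [Set.mem_setOf_eq, Set.mem_iUnion, Set.mem_image, Subgroup.mem_top,
          true_and, SetLike.mem_coe]
      have h1set : (1 : G) ∈ { g : G | ∃ g₁ ∈ (⊤ : Subgroup G), ∃ g₂ ∈ f k, ⁅g₁, g₂⁆ = 1 } :=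
        ⟨1, Subgroup.mem_top 1, 1, (f k).one_mem, by simp⟩
      have hconnset : IsPreconnected
          { g : G | ∃ g₁ ∈ (⊤ : Subgroup G), ∃ g₂ ∈ f k, ⁅g₁, g₂⁆ = g } := by
        rw [hset]
        have hmem : ∀ g : G, (1 : G) ∈ (fun h => ⁅g, h⁆) '' ((f k : Subgroup G) : Set G) :=
          fun g => ⟨1, (f k).one_mem, by simp⟩
        have hpc : ∀ g : G, IsPreconnected ((fun h => ⁅g, h⁆) '' ((f k : Subgroup G) : Set G)) := by
          intro g
          refine ih.image _ (Continuous.continuousOn ?_)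
          simp only [commutatorElement_def]
          continuity
        exact isPreconnected_iUnion ⟨1, Set.mem_iInter.2 hmem⟩ hpc
      exact aux_closure_preconnected h1set hconnset
  -- find the last nontrivial term of the series
  obtain ⟨n, hn⟩ := nilpotent_iff_lowerCentralSeries.mp ‹Group.IsNilpotent G›
  have hP : ∃ k, f k = ⊥ := ⟨n, le_bot_iff.1 (hn ▸ h_lcs n)⟩
  set m := Nat.find hP with hmdef
  have hm : f m = ⊥ := Nat.find_spec hP
  have hm0 : m ≠ 0 := by
    intro h
    exact hL (by rw [← hf0, ← h, hm])
  set K := f (m - 1) with hKdef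
  have hK : K ≠ ⊥ := Nat.find_min hP (by omega)
  have hcommK : ⁅(⊤ : Subgroup G), K⁆ = ⊥ := by
    rw [← hfsucc]
    have : m - 1 + 1 = m := by omega
    rw [this]; exact hm
  -- `K` is contained in the center
  have hKcenter : K ≤ Subgroup.center G := by
    intro k hk
    rw [Subgroup.mem_center_iff]
    intro g
    have : ⁅g, k⁆ ∈ (⊥ : Subgroup G) := by
      rw [← hcommK]
      exact Subgroup.commutator_mem_commutator (Subgroup.mem_top g) hk
    have h1 : ⁅g, k⁆ = 1 := Subgroup.mem_bot.1 this
    exact (commutatorElement_eq_one_iff_mul_comm.1 h1)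
  -- pick a nontrivial element of `K`
  obtain ⟨a, ha⟩ := Subgroup.ne_bot_iff_exists_ne_one.1 hK
  have haG : (a : G) ≠ 1 := by
    intro h; exact ha (Subtype.ext h)
  have haL : (a : G) ∈ L := h_le_L (m - 1) a.2
  have haC : (a : G) ∈ Subgroup.center G := hKcenter a.2
  refine ⟨⟨(a : G), haC⟩, haG, haL, ?_⟩
  -- `K`, viewed inside the center, is preconnected and contains `1` and `a`
  set S' : Set (Subgroup.center G) := Subtype.val ⁻¹' ((K : Subgroup G) : Set G) with hS'def
  have himg : Subtype.val '' S' = ((K : Subgroup G) : Set G) := by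
    rw [hS'def, Set.image_preimage_eq_inter_range, Subtype.range_coe]
    exact Set.inter_eq_left.2 hKcenter
  have hS'conn : IsPreconnected S' := by
    have hind : Topology.IsInducing (Subtype.val : Subgroup.center G → G) := ⟨rfl⟩
    refine (hind.isPreconnected_image (s := S')).mp ?_
    rw [himg]
    exact h_conn (m - 1)
  have h1S' : (1 : Subgroup.center G) ∈ S' := K.one_mem
  have haS' : (⟨(a : G), haC⟩ : Subgroup.center G) ∈ S' := a.2
  exact hS'conn.subset_connectedComponent h1S' haS'
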